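/- Let u, v ∈ T^d = (ℝ ∪ {-∞})^d with u ≤ v coordinatewise. The tropical segment between u and v, i.e., the set of points of the form max(λ + u, μ + v) (coordinatewise maximum, scalars added to every coordinate) with max(λ,μ) = 0, is a polygonal curve consisting of at most d ordinary segments; when oriented from u to v, the successive segments are supported by direction vectors e^{K_1}, …, e^{K_ℓ} where K_1 ⊊ ⋯ ⊊ K_ℓ ⊆ [d], ℓ ≤ d, and e^K denotes the 0/1 indicator vector of K. -/

import Mathlib

open Finset

private lemma wb_map_le_coe {x : WithBot ℝ} {b m : ℝ} :
    x.map (· - b) ≤ (m : WithBot ℝ) ↔ x ≤ ((m + b : ℝ) : WithBot ℝ) := by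
  cases x with
  | bot => simp
  | coe a =>
    simp only [WithBot.map_coe, WithBot.coe_le_coe]
    constructor <;> intro h <;> linarith

private lemma wb_coe_le_map {x : WithBot ℝ} {b m : ℝ} :
    (m : WithBot ℝ) ≤ x.map (· - b) ↔ ((m + b : ℝ) : WithBot ℝ) ≤ x := by
  cases x with
  | bot => simp
  | coe a =>
    simp only [WithBot.map_coe, WithBot.coe_le_coe]
    constructor <;> intro h <;> linarith

/-- The tropical segment between `u` and `v` in `T^d`, where `T = ℝ ∪ {-∞}`. -/
def tsegm {d : ℕ} (u v : Fin d → WithBot ℝ) : Set (Fin d → WithBot ℝ) :=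
  {z | ∃ l m : WithBot ℝ, max l m = 0 ∧ z = fun k => max (l + u k) (m + v k)}

/-- For `u ≤ v`, the tropical segment `tsegm u v` is a polygonal curve made of at
most `d` ordinary segments; oriented from `u` to `v`, they are supported by the
direction vectors `e^{K_1}, …, e^{K_ℓ}` for a strictly increasing chain
`K_1 ⊊ ⋯ ⊊ K_ℓ` of subsets of `[d]`. This is expressed via the parametrization
`m ↦ u ⊕ (m ⊙ v)`, `m ≤ 0`, of the tropical segment: there are breakpoints
`μ_0 ≤ μ_1 ≤ ⋯ ≤ μ_ℓ = 0` such that the curve is constant (equal to `u`) for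
`m ≤ μ_0`, and on each interval `[μ_{i}, μ_{i+1}]` the curve moves with
direction vector `e^{K_{i+1}}`. -/
theorem tropical_segment_structure (d : ℕ) (u v : Fin d → WithBot ℝ)
    (huv : u ≤ v) :
    ∃ ℓ : ℕ, ℓ ≤ d ∧ ∃ K : Fin ℓ → Finset (Fin d),
      (∀ i j : Fin ℓ, i < j → K i ⊂ K j) ∧
      ∃ μ : Fin (ℓ + 1) → WithBot ℝ, Monotone μ ∧ μ (Fin.last ℓ) = 0 ∧
        (∀ m : WithBot ℝ, m ≤ μ 0 → (fun k => max (u k) (m + v k)) = u) ∧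
        tsegm u v = {z | ∃ m : WithBot ℝ, m ≤ 0 ∧
          z = fun k => max (u k) (m + v k)} ∧
        (∀ i : Fin ℓ, ∀ a c : ℝ, μ i.castSucc ≤ (a : WithBot ℝ) → a ≤ c →
          (c : WithBot ℝ) ≤ μ i.succ → ∀ k : Fin d,
            max (u k) ((c : WithBot ℝ) + v k) =
              max (u k) ((a : WithBot ℝ) + v k) +
                (if k ∈ K i then ((c - a : ℝ) : WithBot ℝ) else 0)) := by
  classical
  -- thresholds
  set t : Fin d → WithBot ℝ := fun k => (u k).map (· - (v k).unbotD 0) with ht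
  set A : Finset (Fin d) := Finset.univ.filter (fun k => v k ≠ ⊥) with hA
  set S : Finset (WithBot ℝ) := A.image t with hS
  -- basic facts about thresholds
  have hmemA : ∀ k : Fin d, v k ≠ ⊥ → k ∈ A := by
    intro k hk; simp [hA, hk]
  have htk : ∀ k : Fin d, ∀ b : ℝ, v k = (b : WithBot ℝ) →
      t k = (u k).map (· - b) := by
    intro k b hb; simp [ht, hb]
  have key1 : ∀ k : Fin d, ∀ b m : ℝ, v k = (b : WithBot ℝ) →
      (t k ≤ (m : WithBot ℝ) ↔ u k ≤ (m : WithBot ℝ) + v k) := by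
    intro k b m hb
    rw [htk k b hb, hb, ← WithBot.coe_add, wb_map_le_coe]
  have key2 : ∀ k : Fin d, ∀ b m : ℝ, v k = (b : WithBot ℝ) →
      ((m : WithBot ℝ) ≤ t k ↔ (m : WithBot ℝ) + v k ≤ u k) := by
    intro k b m hb
    rw [htk k b hb, hb, ← WithBot.coe_add, wb_coe_le_map]
  have hS_nonpos : ∀ s ∈ S, s ≤ 0 := by
    intro s hs
    rw [hS] at hs
    obtain ⟨k, hkA, rfl⟩ := Finset.mem_image.mp hs
    have hk : v k ≠ ⊥ := by simpa [hA] using hkA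
    obtain ⟨b, hb⟩ := WithBot.ne_bot_iff_exists.mp hk
    rw [htk k b hb.symm]
    cases hu : u k with
    | bot => simp
    | coe a =>
      have : (a : WithBot ℝ) ≤ (b : WithBot ℝ) := by rw [← hu, hb]; exact huv k
      have hab : a ≤ b := WithBot.coe_le_coe.mp this
      simp only [WithBot.map_coe]
      exact_mod_cast sub_nonpos.mpr hab
  have htS : ∀ k ∈ A, t k ∈ S := fun k hk => Finset.mem_image_of_mem t hk
  refine ⟨S.card, ?_, ?_⟩
  · calc S.card ≤ A.card := Finset.card_image_le
      _ ≤ (Finset.univ : Finset (Fin d)).card := Finset.card_filter_le _ _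
      _ = d := by simp
  set ℓ := S.card with hℓ
  set e : Fin ℓ ≃o {x // x ∈ S} := S.orderIsoOfFin rfl with he
  have he_mem : ∀ i : Fin ℓ, ((e i : WithBot ℝ)) ∈ S := fun i => (e i).2
  have he_mono : ∀ i j : Fin ℓ, i ≤ j → (e i : WithBot ℝ) ≤ (e j : WithBot ℝ) := by
    intro i j hij; exact Subtype.coe_le_coe.mpr (e.le_iff_le.mpr hij)
  have he_strict : ∀ i j : Fin ℓ, i < j → (e i : WithBot ℝ) < (e j : WithBot ℝ) := by
    intro i j hij; exact Subtype.coe_lt_coe.mpr (e.lt_iff_lt.mpr hij)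
  have he_surj : ∀ s ∈ S, ∃ j : Fin ℓ, (e j : WithBot ℝ) = s := by
    intro s hs
    obtain ⟨j, hj⟩ := e.surjective ⟨s, hs⟩
    exact ⟨j, congrArg Subtype.val hj⟩
  set K : Fin ℓ → Finset (Fin d) :=
    fun i => A.filter (fun k => t k ≤ (e i : WithBot ℝ)) with hK
  refine ⟨K, ?_, ?_⟩
  · -- strict chain
    intro i j hij
    constructor
    · intro k hk
      rw [hK, Finset.mem_filter] at hk ⊢
      exact ⟨hk.1, hk.2.trans (he_mono i j hij.le)⟩
    · intro hsub
      obtain ⟨k, hkA, hkt⟩ := Finset.mem_image.mp (he_mem j)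
      have hkj : k ∈ K j := by
        rw [hK, Finset.mem_filter]; exact ⟨hkA, le_of_eq hkt⟩
      have hki := hsub hkj
      rw [hK, Finset.mem_filter] at hki
      exact absurd (hkt ▸ hki.2) (not_le.mpr (he_strict i j hij))
  set μ : Fin (ℓ + 1) → WithBot ℝ :=
    fun i => if h : (i : ℕ) < ℓ then (e ⟨i, h⟩ : WithBot ℝ) else 0 with hμ
  have hμlt : ∀ (i : Fin (ℓ+1)) (h : (i : ℕ) < ℓ), μ i = (e ⟨i, h⟩ : WithBot ℝ) := by
    intro i h; simp [hμ, h]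
  refine ⟨μ, ?_, ?_, ?_, ?_, ?_⟩
  · -- monotone
    intro i j hij
    by_cases hi : (i : ℕ) < ℓ
    · by_cases hj : (j : ℕ) < ℓ
      · rw [hμlt i hi, hμlt j hj]
        exact he_mono _ _ hij
      · rw [hμlt i hi, hμ]
        simp only [hj, dif_neg, not_false_iff]
        exact hS_nonpos _ (he_mem _)
    · have hj : ¬ (j : ℕ) < ℓ := fun h => hi (lt_of_le_of_lt (by exact_mod_cast hij) h)
      simp [hμ, hi, hj]
  · -- μ last = 0
    simp [hμ]
  · -- constancy for m ≤ μ 0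
    intro m hm
    funext k
    by_cases hk : v k = ⊥
    · simp only [hk, WithBot.add_bot]
      exact max_eq_left bot_le
    · have hkA : k ∈ A := hmemA k hk
      have hℓpos : 0 < ℓ := Finset.card_pos.mpr ⟨t k, htS k hkA⟩
      have h0 : ((0 : Fin (ℓ+1)) : ℕ) < ℓ := hℓpos
      rw [hμlt 0 h0] at hm
      obtain ⟨j, hj⟩ := he_surj (t k) (htS k hkA)
      have h0j : (e ⟨0, h0⟩ : WithBot ℝ) ≤ t k := hj ▸ he_mono ⟨0, h0⟩ j (by rw [Fin.le_def]; exact Nat.zero_le _)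
      have hmt : m ≤ t k := hm.trans h0j
      cases m with
      | bot => simp only [WithBot.bot_add]; exact max_eq_left bot_le
      | coe m' =>
        obtain ⟨b, hb⟩ := WithBot.ne_bot_iff_exists.mp hk
        exact max_eq_left ((key2 k b m' hb.symm).mp hmt)
  · -- tsegm equality
    ext z
    simp only [tsegm, Set.mem_setOf_eq]
    constructor
    · rintro ⟨l, m, hlm, rfl⟩
      rcases max_choice l m with h | h
      · have hl : l = 0 := h ▸ hlm
        have hm : m ≤ 0 := hlm ▸ le_max_right l m
        exact ⟨m, hm, by funext k; rw [hl, zero_add]⟩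
      · have hm : m = 0 := h ▸ hlm
        have hl : l ≤ 0 := hlm ▸ le_max_left l m
        refine ⟨0, le_refl _, ?_⟩
        funext k
        rw [hm]
        have h1 : l + u k ≤ u k := by
          calc l + u k ≤ 0 + u k := add_le_add_left hl _
            _ = u k := zero_add _
        have h2 : u k ≤ 0 + v k := by rw [zero_add]; exact huv k
        rw [max_eq_right (h1.trans h2), max_eq_right h2]
    · rintro ⟨m, hm, rfl⟩
      exact ⟨0, m, max_eq_left hm, by funext k; rw [zero_add]⟩
  · -- intervals
    intro i a c ha hac hc k
    have hic : ((i.castSucc : Fin (ℓ+1)) : ℕ) < ℓ := by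
      simp only [Fin.coe_castSucc]; exact i.isLt
    rw [hμlt i.castSucc hic] at ha
    have heq : (⟨((i.castSucc : Fin (ℓ+1)) : ℕ), hic⟩ : Fin ℓ) = i := by
      ext; simp
    rw [heq] at ha
    by_cases hkK : k ∈ K i
    · rw [if_pos hkK]
      rw [hK, Finset.mem_filter] at hkK
      obtain ⟨hkA, hkt⟩ := hkK
      have hk : v k ≠ ⊥ := by simpa [hA] using hkA
      obtain ⟨b, hb⟩ := WithBot.ne_bot_iff_exists.mp hk
      have hta : t k ≤ (a : WithBot ℝ) := hkt.trans ha
      have htc : t k ≤ (c : WithBot ℝ) := hta.trans (WithBot.coe_le_coe.mpr hac)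
      rw [max_eq_right ((key1 k b a hb.symm).mp hta),
        max_eq_right ((key1 k b c hb.symm).mp htc), ← hb]
      rw [← WithBot.coe_add, ← WithBot.coe_add, ← WithBot.coe_add, WithBot.coe_eq_coe]
      ring
    · rw [if_neg hkK]
      by_cases hk : v k = ⊥
      · simp only [hk, WithBot.add_bot]
        simp [max_eq_left (bot_le : (⊥:WithBot ℝ) ≤ u k)]
      · have hkA : k ∈ A := hmemA k hk
        have hnt : ¬ t k ≤ (e i : WithBot ℝ) := by
          intro h; exact hkK (by rw [hK, Finset.mem_filter]; exact ⟨hkA, h⟩)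
        have hlt : (e i : WithBot ℝ) < t k := not_le.mp hnt
        obtain ⟨j, hj⟩ := he_surj (t k) (htS k hkA)
        have hij : i < j := by
          by_contra hcon
          exact absurd (hj ▸ he_mono j i (not_lt.mp hcon)) (not_le.mpr hlt)
        have hisucc : ((i.succ : Fin (ℓ+1)) : ℕ) < ℓ := by
          have : (i : ℕ) + 1 ≤ (j : ℕ) := hij
          have := this.trans_lt j.isLt
          simpa using this
        rw [hμlt i.succ hisucc] at hc
        have hejle : (e ⟨((i.succ : Fin (ℓ+1)) : ℕ), hisucc⟩ : WithBot ℝ) ≤ t k := by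
          rw [← hj]
          apply he_mono
          show (⟨((i.succ : Fin (ℓ+1)) : ℕ), hisucc⟩ : Fin ℓ) ≤ j
          rw [Fin.le_def]
          simpa using hij
        have hct : (c : WithBot ℝ) ≤ t k := hc.trans hejle
        have hat : (a : WithBot ℝ) ≤ t k := (WithBot.coe_le_coe.mpr hac).trans hct
        obtain ⟨b, hb⟩ := WithBot.ne_bot_iff_exists.mp hk
        rw [max_eq_left ((key2 k b c hb.symm).mp hct),
          max_eq_left ((key2 k b a hb.symm).mp hat), add_zero]
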